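/- If n₁, n₂, n₃, n₄, n₅ are positive integers with 1/n₁ + 1/n₂ + 1/n₃ + 1/n₄ + 1/n₅ = 1, then nᵢ ≤ 1806 for every i. -/

import Mathlib

set_option maxHeartbeats 10000000 in
lemma inv_lt_nat (x N : ℕ) (hN : 0 < N) (h : ((N:ℚ))⁻¹ < ((x:ℚ))⁻¹) : x < N := by
  by_contra hx
  push_neg at hx
  have : ((x:ℚ))⁻¹ ≤ ((N:ℚ))⁻¹ := by
    apply inv_anti₀
    · exact_mod_cast hN
    · exact_mod_cast hx
  linarith

set_option maxHeartbeats 10000000 in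
lemma L4sorted (a b c d : ℕ) (ha : 0 < a) (hab : a ≤ b) (hbc : b ≤ c) (hcd : c ≤ d)
    (h : (a:ℚ)⁻¹ + (b:ℚ)⁻¹ + (c:ℚ)⁻¹ + (d:ℚ)⁻¹ < 1) :
    (a:ℚ)⁻¹ + (b:ℚ)⁻¹ + (c:ℚ)⁻¹ + (d:ℚ)⁻¹ ≤ 1805/1806 := by
  by_contra hq
  push_neg at hq
  have hb : 0 < b := lt_of_lt_of_le ha hab
  have hc : 0 < c := lt_of_lt_of_le hb hbc
  have hd : 0 < d := lt_of_lt_of_le hc hcd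
  have pa : (0:ℚ) < (a:ℚ)⁻¹ := by positivity
  have pb : (0:ℚ) < (b:ℚ)⁻¹ := by positivity
  have pc : (0:ℚ) < (c:ℚ)⁻¹ := by positivity
  have pd : (0:ℚ) < (d:ℚ)⁻¹ := by positivity
  have iba : (b:ℚ)⁻¹ ≤ (a:ℚ)⁻¹ := by
    apply inv_anti₀ (by exact_mod_cast ha) (by exact_mod_cast hab)
  have icb : (c:ℚ)⁻¹ ≤ (b:ℚ)⁻¹ := by
    apply inv_anti₀ (by exact_mod_cast hb) (by exact_mod_cast hbc)
  have idc : (d:ℚ)⁻¹ ≤ (c:ℚ)⁻¹ := by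
    apply inv_anti₀ (by exact_mod_cast hc) (by exact_mod_cast hcd)
  have ha5 : a < 5 := inv_lt_nat a 5 (by norm_num) (by
    have : (5:ℚ)⁻¹ < (a:ℚ)⁻¹ := by linarith
    exact_mod_cast this)
  clear pa
  interval_cases a <;> norm_num at h hq <;>
  · first
    | linarith
    | (have hb7 : b < 7 := inv_lt_nat b 7 (by norm_num) (by linarith)
       clear pb
       interval_cases b <;> norm_num at h hq <;>
       · first
         | linarith
         | (have hc13 : c < 13 := inv_lt_nat c 13 (by norm_num) (by linarith)
            clear pc
            interval_cases c <;> norm_num at h hq <;>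
            · first
              | linarith
              | (have hd43 : d < 43 := inv_lt_nat d 43 (by norm_num) (by linarith)
                 interval_cases d <;> first | (norm_num at h; done) | (norm_num at hq; done))))

set_option maxHeartbeats 4000000 in
lemma L4 (a b c d : ℕ) (ha : 0 < a) (hb : 0 < b) (hc : 0 < c) (hd : 0 < d)
    (h : (a:ℚ)⁻¹ + (b:ℚ)⁻¹ + (c:ℚ)⁻¹ + (d:ℚ)⁻¹ < 1) :
    (a:ℚ)⁻¹ + (b:ℚ)⁻¹ + (c:ℚ)⁻¹ + (d:ℚ)⁻¹ ≤ 1805/1806 := by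
  rcases le_total a b with h1 | h1 <;>
  rcases le_total a c with h2 | h2 <;>
  rcases le_total a d with h3 | h3 <;>
  rcases le_total b c with h4 | h4 <;>
  rcases le_total b d with h5 | h5 <;>
  rcases le_total c d with h6 | h6 <;>
  first
  | (linarith [L4sorted a b c d ha (by omega) (by omega) (by omega) (by linarith)])
  | (linarith [L4sorted a b d c ha (by omega) (by omega) (by omega) (by linarith)])
  | (linarith [L4sorted a c b d ha (by omega) (by omega) (by omega) (by linarith)])
  | (linarith [L4sorted a c d b ha (by omega) (by omega) (by omega) (by linarith)])
  | (linarith [L4sorted a d b c ha (by omega) (by omega) (by omega) (by linarith)])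
  | (linarith [L4sorted a d c b ha (by omega) (by omega) (by omega) (by linarith)])
  | (linarith [L4sorted b a c d hb (by omega) (by omega) (by omega) (by linarith)])
  | (linarith [L4sorted b a d c hb (by omega) (by omega) (by omega) (by linarith)])
  | (linarith [L4sorted b c a d hb (by omega) (by omega) (by omega) (by linarith)])
  | (linarith [L4sorted b c d a hb (by omega) (by omega) (by omega) (by linarith)])
  | (linarith [L4sorted b d a c hb (by omega) (by omega) (by omega) (by linarith)])
  | (linarith [L4sorted b d c a hb (by omega) (by omega) (by omega) (by linarith)])
  | (linarith [L4sorted c a b d hc (by omega) (by omega) (by omega) (by linarith)])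
  | (linarith [L4sorted c a d b hc (by omega) (by omega) (by omega) (by linarith)])
  | (linarith [L4sorted c b a d hc (by omega) (by omega) (by omega) (by linarith)])
  | (linarith [L4sorted c b d a hc (by omega) (by omega) (by omega) (by linarith)])
  | (linarith [L4sorted c d a b hc (by omega) (by omega) (by omega) (by linarith)])
  | (linarith [L4sorted c d b a hc (by omega) (by omega) (by omega) (by linarith)])
  | (linarith [L4sorted d a b c hd (by omega) (by omega) (by omega) (by linarith)])
  | (linarith [L4sorted d a c b hd (by omega) (by omega) (by omega) (by linarith)])
  | (linarith [L4sorted d b a c hd (by omega) (by omega) (by omega) (by linarith)])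
  | (linarith [L4sorted d b c a hd (by omega) (by omega) (by omega) (by linarith)])
  | (linarith [L4sorted d c a b hd (by omega) (by omega) (by omega) (by linarith)])
  | (linarith [L4sorted d c b a hd (by omega) (by omega) (by omega) (by linarith)])


lemma inv_le_nat (x N : ℕ) (hN : 0 < N) (h : ((N:ℚ))⁻¹ ≤ ((x:ℚ))⁻¹) : x ≤ N := by
  by_contra hc
  push_neg at hc
  have : ((x:ℚ))⁻¹ < ((N:ℚ))⁻¹ := by
    apply inv_strictAnti₀
    · exact_mod_cast hN
    · exact_mod_cast hc
  linarith

lemma one_term_bound (a b c d e : ℕ) (ha : 0 < a) (hb : 0 < b) (hc : 0 < c)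
    (hd : 0 < d) (he : 0 < e)
    (h : (a:ℚ)⁻¹ + (b:ℚ)⁻¹ + (c:ℚ)⁻¹ + (d:ℚ)⁻¹ + (e:ℚ)⁻¹ = 1) : e ≤ 1806 := by
  have pe : (0:ℚ) < (e:ℚ)⁻¹ := by positivity
  have hlt : (a:ℚ)⁻¹ + (b:ℚ)⁻¹ + (c:ℚ)⁻¹ + (d:ℚ)⁻¹ < 1 := by linarith
  have hle := L4 a b c d ha hb hc hd hlt
  apply inv_le_nat e 1806 (by norm_num)
  have : ((1806:ℕ):ℚ)⁻¹ = 1/1806 := by norm_num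
  rw [this]
  linarith

/-- If `n₁, …, n₅` are positive integers whose reciprocals sum to `1`,
then each `nᵢ` is at most `1806`. -/
theorem stmt_15 (n₁ n₂ n₃ n₄ n₅ : ℕ)
    (h₁ : 0 < n₁) (h₂ : 0 < n₂) (h₃ : 0 < n₃) (h₄ : 0 < n₄) (h₅ : 0 < n₅)
    (h : (n₁ : ℚ)⁻¹ + (n₂ : ℚ)⁻¹ + (n₃ : ℚ)⁻¹ + (n₄ : ℚ)⁻¹ + (n₅ : ℚ)⁻¹ = 1) :
    n₁ ≤ 1806 ∧ n₂ ≤ 1806 ∧ n₃ ≤ 1806 ∧ n₄ ≤ 1806 ∧ n₅ ≤ 1806 := by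
  refine ⟨?_, ?_, ?_, ?_, ?_⟩
  · exact one_term_bound n₂ n₃ n₄ n₅ n₁ h₂ h₃ h₄ h₅ h₁ (by linarith)
  · exact one_term_bound n₁ n₃ n₄ n₅ n₂ h₁ h₃ h₄ h₅ h₂ (by linarith)
  · exact one_term_bound n₁ n₂ n₄ n₅ n₃ h₁ h₂ h₄ h₅ h₃ (by linarith)
  · exact one_term_bound n₁ n₂ n₃ n₅ n₄ h₁ h₂ h₃ h₅ h₄ (by linarith)
  · exact one_term_bound n₁ n₂ n₃ n₄ n₅ h₁ h₂ h₃ h₄ h₅ (by linarith)
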